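/- Let f, g, h : ℝ² → ℂ be compactly supported L² functions, with f supported in I_{k₁} × Ĩ_{j₁}, g supported in I_{k₂} × Ĩ_{j₂}, h supported in I_{k₃} × Ĩ_{j₃}, where I_k = {ξ : |ξ| ∈ [2^(k-1), 2^(k+1)]} for k ∈ ℤ and Ĩ_j = [-2,2] if j = 0, Ĩ_j = I_j if j ≥ 1. Define J(f,g,h) = ∫∫∫∫ f(ξ₁,μ₁) g(ξ₂,μ₂) h(ξ₁+ξ₂, μ₁+μ₂+Ω(ξ₁,ξ₂)) dξ₁ dξ₂ dμ₁ dμ₂ with Ω(ξ₁,ξ₂) = -ω(ξ₁+ξ₂)+ω(ξ₁)+ω(ξ₂), ω(ξ) = -ξ|ξ|. Then |J(f,g,h)| ≤ C · 2^(min(k₁,k₂,k₃)/2) · 2^(min(j₁,j₂,j₃)/2) · ‖f‖_{L²} ‖g‖_{L²} ‖h‖_{L²} for an absolute constant C. -/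

import Mathlib

open MeasureTheory

noncomputable section

/-- Benjamin–Ono dispersion relation. -/
def ω (ξ : ℝ) : ℝ := -ξ * |ξ|

/-- Resonance function. -/
def Ωres (ξ₁ ξ₂ : ℝ) : ℝ := -ω (ξ₁ + ξ₂) + ω ξ₁ + ω ξ₂

/-- Dyadic frequency annulus `I_k`. -/
def Idy (k : ℤ) : Set ℝ := {ξ : ℝ | (2 : ℝ) ^ (k - 1) ≤ |ξ| ∧ |ξ| ≤ (2 : ℝ) ^ (k + 1)}

/-- Modified dyadic interval `Ĩ_j`. -/
def Itil (j : ℕ) : Set ℝ := if j = 0 then Set.Icc (-2 : ℝ) 2 else Idy (j : ℤ)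

/-- The trilinear convolution-type form `J`. -/
def J (f g h : ℝ × ℝ → ℂ) : ℂ :=
  ∫ ξ₁ : ℝ, ∫ ξ₂ : ℝ, ∫ μ₁ : ℝ, ∫ μ₂ : ℝ,
    f (ξ₁, μ₁) * g (ξ₂, μ₂) * h (ξ₁ + ξ₂, μ₁ + μ₂ + Ωres ξ₁ ξ₂)

/-- The `L²` norm (as a real number) of a function on `ℝ²`. -/
def L2norm (f : ℝ × ℝ → ℂ) : ℝ := (eLpNorm f 2 volume).toReal

open ENNReal

namespace Tri

def n2 (F : ℝ × ℝ → ℝ≥0∞) : ℝ≥0∞ := (∫⁻ p : ℝ × ℝ, F p ^ (2:ℝ)) ^ (1/2 : ℝ)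

lemma holder2 {α : Type*} [MeasurableSpace α] (μ : Measure α) {f g : α → ℝ≥0∞}
    (hf : AEMeasurable f μ) (hg : AEMeasurable g μ) :
    ∫⁻ x, f x * g x ∂μ ≤ (∫⁻ x, f x ^ (2:ℝ) ∂μ) ^ (1/2:ℝ) * (∫⁻ x, g x ^ (2:ℝ) ∂μ) ^ (1/2:ℝ) :=
  ENNReal.lintegral_mul_le_Lp_mul_Lq μ (by constructor <;> norm_num) hf hg

lemma sq_sqrt (x : ℝ≥0∞) : (x ^ (1/2:ℝ)) ^ (2:ℝ) = x := by
  rw [← ENNReal.rpow_mul]; norm_num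

lemma sqrt_mul (x y : ℝ≥0∞) : (x * y) ^ (1/2:ℝ) = x ^ (1/2:ℝ) * y ^ (1/2:ℝ) :=
  ENNReal.mul_rpow_of_nonneg x y (by norm_num)

lemma core {F G H : ℝ × ℝ → ℝ≥0∞} (hF : Measurable F) (hG : Measurable G) (hH : Measurable H)
    {Φ : ℝ → ℝ → ℝ} (hΦ : Measurable fun q : ℝ × ℝ => Φ q.1 q.2)
    {U V U' V' : Set ℝ} (hU : MeasurableSet U) (hV : MeasurableSet V)
    (hU' : MeasurableSet U') (hV' : MeasurableSet V')
    (hr : min (volume U) (volume U') ≠ ⊤) (hs : min (volume V) (volume V') ≠ ⊤)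
    (hGs : ∀ p : ℝ × ℝ, G p ≠ 0 → p.1 ∈ U ∧ p.2 ∈ V)
    (hHs : ∀ p : ℝ × ℝ, H p ≠ 0 → p.1 ∈ U' ∧ p.2 ∈ V') :
    (∫⁻ ξ₁, ∫⁻ μ₁, F (ξ₁, μ₁) * ∫⁻ ξ₂, ∫⁻ μ₂, G (ξ₂, μ₂) * H (ξ₁ + ξ₂, μ₁ + μ₂ + Φ ξ₁ ξ₂)) ≤
      min (volume U) (volume U') ^ (1/2:ℝ) * min (volume V) (volume V') ^ (1/2:ℝ) *
        (n2 F * n2 G * n2 H) := by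
  classical
  set r := min (volume U) (volume U') with hrdef
  set s := min (volume V) (volume V') with hsdef
  set K : ℝ × ℝ → ℝ≥0∞ :=
    fun p => ∫⁻ q : ℝ × ℝ, G q * H (p.1 + q.1, p.2 + q.2 + Φ p.1 q.1) with hKdef
  set M : ℝ × ℝ → ℝ≥0∞ :=
    fun p => ∫⁻ q : ℝ × ℝ, (G q * H (p.1 + q.1, p.2 + q.2 + Φ p.1 q.1)) ^ (2:ℝ) with hMdef
  have hshift : Measurable fun z : (ℝ × ℝ) × (ℝ × ℝ) =>
      H (z.1.1 + z.2.1, z.1.2 + z.2.2 + Φ z.1.1 z.2.1) := by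
    apply hH.comp
    exact (measurable_fst.fst.add measurable_snd.fst).prodMk
      ((measurable_fst.snd.add measurable_snd.snd).add
        (hΦ.comp (measurable_fst.fst.prodMk measurable_snd.fst)))
  have hGH : Measurable fun z : (ℝ × ℝ) × (ℝ × ℝ) =>
      G z.2 * H (z.1.1 + z.2.1, z.1.2 + z.2.2 + Φ z.1.1 z.2.1) :=
    (hG.comp measurable_snd).mul hshift
  have hKm : Measurable K := hGH.lintegral_prod_right'
  have hMm : Measurable M := (hGH.pow_const _).lintegral_prod_right'
  -- Step 1 : LHS as a product-space integral
  have step1 : (∫⁻ ξ₁, ∫⁻ μ₁, F (ξ₁, μ₁) *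
      ∫⁻ ξ₂, ∫⁻ μ₂, G (ξ₂, μ₂) * H (ξ₁ + ξ₂, μ₁ + μ₂ + Φ ξ₁ ξ₂))
      = ∫⁻ p : ℝ × ℝ, F p * K p := by
    rw [Measure.volume_eq_prod, lintegral_prod (fun p : ℝ × ℝ => F p * K p) (hF.mul hKm).aemeasurable]
    refine lintegral_congr fun ξ₁ => lintegral_congr fun μ₁ => ?_
    congr 1
    show _ = K (ξ₁, μ₁)
    rw [hKdef]
    simp only
    rw [Measure.volume_eq_prod]
    exact (lintegral_prod _ ((hGH.comp ((measurable_const (a := ((ξ₁, μ₁) : ℝ × ℝ))).prodMk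
      measurable_id)).aemeasurable)).symm
  -- pointwise bound on K
  have hpoint : ∀ p : ℝ × ℝ, K p ≤ r ^ (1/2:ℝ) * s ^ (1/2:ℝ) * M p ^ (1/2:ℝ) := by
    rintro ⟨x, y⟩
    have hEm : ∀ ξ₂ : ℝ, Measurable fun μ₂ => G (ξ₂, μ₂) * H (x + ξ₂, y + μ₂ + Φ x ξ₂) := by
      intro ξ₂
      exact (hGH.comp
        ((measurable_const (a := ((x, y) : ℝ × ℝ))).prodMk
          ((measurable_const (a := ξ₂)).prodMk measurable_id)))
    set A : ℝ → ℝ≥0∞ :=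
      fun ξ₂ => ∫⁻ μ₂, (G (ξ₂, μ₂) * H (x + ξ₂, y + μ₂ + Φ x ξ₂)) ^ (2:ℝ) with hAdef
    have hAm : Measurable A := by
      have : Measurable fun w : ℝ × ℝ =>
          (G (w.1, w.2) * H (x + w.1, y + w.2 + Φ x w.1)) ^ (2:ℝ) := by
        exact ((hGH.comp ((measurable_const (a := ((x,y):ℝ×ℝ))).prodMk measurable_id)).pow_const _)
      exact this.lintegral_prod_right'
    have hKit : K (x, y) = ∫⁻ ξ₂, ∫⁻ μ₂, G (ξ₂, μ₂) * H (x + ξ₂, y + μ₂ + Φ x ξ₂) := by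
      rw [hKdef]
      simp only
      rw [Measure.volume_eq_prod]
      exact lintegral_prod _ ((hGH.comp ((measurable_const (a := ((x, y) : ℝ × ℝ))).prodMk
        measurable_id)).aemeasurable)
    have inner : ∀ ξ₂ : ℝ,
        (∫⁻ μ₂, G (ξ₂, μ₂) * H (x + ξ₂, y + μ₂ + Φ x ξ₂)) ≤ s ^ (1/2:ℝ) * A ξ₂ ^ (1/2:ℝ) := by
      intro ξ₂
      set T : Set ℝ := V ∩ (fun μ₂ => μ₂ + (y + Φ x ξ₂)) ⁻¹' V' with hTdef
      have hTm : MeasurableSet T := hV.inter (hV'.preimage (measurable_add_const _))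
      have hTvol : volume T ≤ s := by
        rw [hsdef]
        refine le_min (measure_mono Set.inter_subset_left |>.trans ?_) ?_
        · exact le_rfl
        · refine (measure_mono Set.inter_subset_right).trans ?_
          rw [measure_preimage_add_right]
      have hzero : ∀ μ₂ ∉ T, G (ξ₂, μ₂) * H (x + ξ₂, y + μ₂ + Φ x ξ₂) = 0 := by
        intro μ₂ hμ
        by_cases hGz : G (ξ₂, μ₂) = 0
        · simp [hGz]
        by_cases hHz : H (x + ξ₂, y + μ₂ + Φ x ξ₂) = 0
        · simp [hHz]
        exact absurd ⟨(hGs _ hGz).2, show μ₂ + (y + Φ x ξ₂) ∈ V' by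
          rw [show μ₂ + (y + Φ x ξ₂) = y + μ₂ + Φ x ξ₂ by ring]
          exact (hHs _ hHz).2⟩ hμ
      calc (∫⁻ μ₂, G (ξ₂, μ₂) * H (x + ξ₂, y + μ₂ + Φ x ξ₂))
          = ∫⁻ μ₂, T.indicator (fun _ => 1) μ₂ * (G (ξ₂, μ₂) * H (x + ξ₂, y + μ₂ + Φ x ξ₂)) := by
            refine lintegral_congr fun μ₂ => ?_
            by_cases hμ : μ₂ ∈ T
            · simp [Set.indicator_of_mem hμ]
            · simp [Set.indicator_of_notMem hμ, hzero μ₂ hμ]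
        _ ≤ (∫⁻ μ₂, T.indicator (fun _ => 1) μ₂ ^ (2:ℝ)) ^ (1/2:ℝ) * A ξ₂ ^ (1/2:ℝ) :=
            holder2 _ ((measurable_const.indicator hTm).aemeasurable) (hEm ξ₂).aemeasurable
        _ ≤ s ^ (1/2:ℝ) * A ξ₂ ^ (1/2:ℝ) := by
            gcongr
            calc (∫⁻ μ₂, T.indicator (fun _ => 1) μ₂ ^ (2:ℝ))
                = ∫⁻ μ₂, T.indicator (fun _ => 1) μ₂ := by
                  refine lintegral_congr fun μ₂ => ?_
                  by_cases hμ : μ₂ ∈ T <;>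
                    simp [hμ, ENNReal.zero_rpow_of_pos]
              _ = volume T := by rw [lintegral_indicator hTm]; simp
              _ ≤ s := hTvol
    set W : Set ℝ := U ∩ (fun ξ₂ => x + ξ₂) ⁻¹' U' with hWdef
    have hWm : MeasurableSet W := hU.inter (hU'.preimage (measurable_const_add _))
    have hWvol : volume W ≤ r := by
      rw [hrdef]
      refine le_min (measure_mono Set.inter_subset_left) ?_
      refine (measure_mono Set.inter_subset_right).trans ?_
      rw [measure_preimage_add]
    have hAzero : ∀ ξ₂ ∉ W, A ξ₂ ^ (1/2:ℝ) = 0 := by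
      intro ξ₂ hξ
      have hA0 : A ξ₂ = 0 := by
        rw [hAdef]
        simp only
        rw [← lintegral_zero]
        refine lintegral_congr fun μ₂ => ?_
        by_cases hGz : G (ξ₂, μ₂) = 0
        · simp [hGz, ENNReal.zero_rpow_of_pos]
        by_cases hHz : H (x + ξ₂, y + μ₂ + Φ x ξ₂) = 0
        · simp [hHz, ENNReal.zero_rpow_of_pos]
        exact absurd ⟨(hGs _ hGz).1, (hHs _ hHz).1⟩ hξ
      rw [hA0]
      exact ENNReal.zero_rpow_of_pos (by norm_num)
    have hMit : (∫⁻ ξ₂, A ξ₂) = M (x, y) := by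
      rw [hMdef]
      simp only
      rw [Measure.volume_eq_prod]
      exact (lintegral_prod _ (((hGH.comp ((measurable_const (a := ((x, y) : ℝ × ℝ))).prodMk
        measurable_id)).pow_const _).aemeasurable)).symm
    calc K (x, y) = ∫⁻ ξ₂, ∫⁻ μ₂, G (ξ₂, μ₂) * H (x + ξ₂, y + μ₂ + Φ x ξ₂) := hKit
      _ ≤ ∫⁻ ξ₂, s ^ (1/2:ℝ) * A ξ₂ ^ (1/2:ℝ) := lintegral_mono inner
      _ = s ^ (1/2:ℝ) * ∫⁻ ξ₂, A ξ₂ ^ (1/2:ℝ) :=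
          lintegral_const_mul' _ _ (ENNReal.rpow_ne_top_of_nonneg (by norm_num) hs)
      _ ≤ s ^ (1/2:ℝ) * (r ^ (1/2:ℝ) * M (x, y) ^ (1/2:ℝ)) := by
          gcongr
          calc (∫⁻ ξ₂, A ξ₂ ^ (1/2:ℝ))
              = ∫⁻ ξ₂, W.indicator (fun _ => 1) ξ₂ * A ξ₂ ^ (1/2:ℝ) := by
                refine lintegral_congr fun ξ₂ => ?_
                by_cases hξ : ξ₂ ∈ W
                · simp [Set.indicator_of_mem hξ]
                · rw [Set.indicator_of_notMem hξ, zero_mul]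
                  exact hAzero ξ₂ hξ
            _ ≤ (∫⁻ ξ₂, W.indicator (fun _ => 1) ξ₂ ^ (2:ℝ)) ^ (1/2:ℝ) *
                  (∫⁻ ξ₂, (A ξ₂ ^ (1/2:ℝ)) ^ (2:ℝ)) ^ (1/2:ℝ) :=
                holder2 _ ((measurable_const.indicator hWm).aemeasurable)
                  ((hAm.pow_const _).aemeasurable)
            _ ≤ r ^ (1/2:ℝ) * M (x, y) ^ (1/2:ℝ) := by
                gcongr
                · calc (∫⁻ ξ₂, W.indicator (fun _ => 1) ξ₂ ^ (2:ℝ))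
                      = ∫⁻ ξ₂, W.indicator (fun _ => 1) ξ₂ := by
                        refine lintegral_congr fun ξ₂ => ?_
                        by_cases hξ : ξ₂ ∈ W <;> simp [hξ, ENNReal.zero_rpow_of_pos]
                    _ = volume W := by rw [lintegral_indicator hWm]; simp
                    _ ≤ r := hWvol
                · rw [← hMit]
                  exact le_of_eq (lintegral_congr fun ξ₂ => sq_sqrt _)
      _ = r ^ (1/2:ℝ) * s ^ (1/2:ℝ) * M (x, y) ^ (1/2:ℝ) := by ring
  -- integral of K²
  have hHtrans : ∀ q : ℝ × ℝ,
      (∫⁻ p : ℝ × ℝ, H (p.1 + q.1, p.2 + q.2 + Φ p.1 q.1) ^ (2:ℝ)) =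
        ∫⁻ p : ℝ × ℝ, H p ^ (2:ℝ) := by
    intro q
    have hm1 : Measurable fun p : ℝ × ℝ => H (p.1 + q.1, p.2 + q.2 + Φ p.1 q.1) ^ (2:ℝ) := by
      exact ((hshift.comp (measurable_id.prodMk measurable_const)).pow_const _)
    rw [Measure.volume_eq_prod, lintegral_prod _ hm1.aemeasurable,
      lintegral_prod _ ((hH.pow_const _).aemeasurable)]
    have step_in : ∀ ξ₁ : ℝ,
        (∫⁻ μ₁, H (ξ₁ + q.1, μ₁ + q.2 + Φ ξ₁ q.1) ^ (2:ℝ)) =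
          ∫⁻ t, H (ξ₁ + q.1, t) ^ (2:ℝ) := by
      intro ξ₁
      rw [← lintegral_add_right_eq_self (fun t => H (ξ₁ + q.1, t) ^ (2:ℝ)) (q.2 + Φ ξ₁ q.1)]
      exact lintegral_congr fun μ₁ => by rw [add_assoc]
    rw [lintegral_congr step_in]
    exact lintegral_add_right_eq_self (fun z => ∫⁻ t, H (z, t) ^ (2:ℝ)) q.1
  have hMint : (∫⁻ p : ℝ × ℝ, M p) =
      (∫⁻ q : ℝ × ℝ, G q ^ (2:ℝ)) * ∫⁻ q : ℝ × ℝ, H q ^ (2:ℝ) := by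
    have hMeq : ∀ p : ℝ × ℝ, M p =
        ∫⁻ q : ℝ × ℝ, G q ^ (2:ℝ) * H (p.1 + q.1, p.2 + q.2 + Φ p.1 q.1) ^ (2:ℝ) := by
      intro p
      rw [hMdef]
      exact lintegral_congr fun q => ENNReal.mul_rpow_of_nonneg _ _ (by norm_num)
    rw [lintegral_congr hMeq]
    rw [lintegral_lintegral_swap]
    · calc (∫⁻ q : ℝ × ℝ, ∫⁻ p : ℝ × ℝ,
            G q ^ (2:ℝ) * H (p.1 + q.1, p.2 + q.2 + Φ p.1 q.1) ^ (2:ℝ))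
          = ∫⁻ q : ℝ × ℝ, G q ^ (2:ℝ) * ∫⁻ p : ℝ × ℝ,
              H (p.1 + q.1, p.2 + q.2 + Φ p.1 q.1) ^ (2:ℝ) := by
            refine lintegral_congr fun q => ?_
            exact lintegral_const_mul _
              ((hshift.comp (measurable_id.prodMk measurable_const)).pow_const _)
        _ = ∫⁻ q : ℝ × ℝ, G q ^ (2:ℝ) * ∫⁻ p : ℝ × ℝ, H p ^ (2:ℝ) := by
            exact lintegral_congr fun q => by rw [hHtrans q]
        _ = (∫⁻ q : ℝ × ℝ, G q ^ (2:ℝ)) * ∫⁻ q : ℝ × ℝ, H q ^ (2:ℝ) :=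
            lintegral_mul_const _ (hG.pow_const _)
    · exact (((hG.comp measurable_snd).pow_const _).mul (hshift.pow_const _)).aemeasurable
  have stepK : (∫⁻ p : ℝ × ℝ, K p ^ (2:ℝ)) ≤
      r * s * ((∫⁻ q : ℝ × ℝ, G q ^ (2:ℝ)) * ∫⁻ q : ℝ × ℝ, H q ^ (2:ℝ)) := by
    calc (∫⁻ p : ℝ × ℝ, K p ^ (2:ℝ)) ≤ ∫⁻ p : ℝ × ℝ, r * s * M p := by
          refine lintegral_mono fun p => ?_
          calc K p ^ (2:ℝ) ≤ (r ^ (1/2:ℝ) * s ^ (1/2:ℝ) * M p ^ (1/2:ℝ)) ^ (2:ℝ) :=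
                ENNReal.rpow_le_rpow (hpoint p) (by norm_num)
            _ = r * s * M p := by
                rw [ENNReal.mul_rpow_of_nonneg _ _ (by norm_num : (0:ℝ) ≤ 2),
                  ENNReal.mul_rpow_of_nonneg _ _ (by norm_num : (0:ℝ) ≤ 2),
                  sq_sqrt, sq_sqrt, sq_sqrt]
      _ = r * s * ∫⁻ p : ℝ × ℝ, M p :=
          lintegral_const_mul' _ _ (ENNReal.mul_ne_top hr hs)
      _ = r * s * ((∫⁻ q : ℝ × ℝ, G q ^ (2:ℝ)) * ∫⁻ q : ℝ × ℝ, H q ^ (2:ℝ)) := by rw [hMint]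
  -- conclude
  calc (∫⁻ ξ₁, ∫⁻ μ₁, F (ξ₁, μ₁) *
        ∫⁻ ξ₂, ∫⁻ μ₂, G (ξ₂, μ₂) * H (ξ₁ + ξ₂, μ₁ + μ₂ + Φ ξ₁ ξ₂))
      = ∫⁻ p : ℝ × ℝ, F p * K p := step1
    _ ≤ (∫⁻ p : ℝ × ℝ, F p ^ (2:ℝ)) ^ (1/2:ℝ) * (∫⁻ p : ℝ × ℝ, K p ^ (2:ℝ)) ^ (1/2:ℝ) :=
        holder2 _ hF.aemeasurable hKm.aemeasurable
    _ ≤ (∫⁻ p : ℝ × ℝ, F p ^ (2:ℝ)) ^ (1/2:ℝ) *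
          (r * s * ((∫⁻ q : ℝ × ℝ, G q ^ (2:ℝ)) * ∫⁻ q : ℝ × ℝ, H q ^ (2:ℝ))) ^ (1/2:ℝ) := by
        gcongr
    _ = r ^ (1/2:ℝ) * s ^ (1/2:ℝ) * (n2 F * n2 G * n2 H) := by
        rw [sqrt_mul, sqrt_mul, sqrt_mul]
        unfold n2
        ring

end Tri
-- to be appended inside namespace Tri (after core); test appended to p2 content

namespace Tri

lemma Ωres_symm (ξ₁ ξ₂ : ℝ) : Ωres ξ₁ ξ₂ = Ωres ξ₂ ξ₁ := by
  unfold Ωres; rw [add_comm ξ₁ ξ₂]; ring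

lemma meas_Ω : Measurable fun q : ℝ × ℝ => Ωres q.1 q.2 := by
  have : Continuous fun q : ℝ × ℝ => Ωres q.1 q.2 := by
    unfold Ωres ω; continuity
  exact this.measurable

def L4 (a b c : ℝ × ℝ → ℝ≥0∞) : ℝ≥0∞ :=
  ∫⁻ ξ₁, ∫⁻ ξ₂, ∫⁻ μ₁, ∫⁻ μ₂, a (ξ₁, μ₁) * b (ξ₂, μ₂) * c (ξ₁ + ξ₂, μ₁ + μ₂ + Ωres ξ₁ ξ₂)

lemma J_le (f g h : ℝ × ℝ → ℂ) :
    (‖J f g h‖₊ : ℝ≥0∞) ≤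
      L4 (fun p => (‖f p‖₊ : ℝ≥0∞)) (fun p => (‖g p‖₊ : ℝ≥0∞)) (fun p => (‖h p‖₊ : ℝ≥0∞)) := by
  unfold J L4
  refine le_trans (enorm_integral_le_lintegral_enorm _) ?_
  refine lintegral_mono fun ξ₁ => ?_
  refine le_trans (enorm_integral_le_lintegral_enorm _) ?_
  refine lintegral_mono fun ξ₂ => ?_
  refine le_trans (enorm_integral_le_lintegral_enorm _) ?_
  refine lintegral_mono fun μ₁ => ?_
  refine le_trans (enorm_integral_le_lintegral_enorm _) ?_
  refine lintegral_mono fun μ₂ => ?_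
  simp [nnnorm_mul, ENNReal.coe_mul]
  exact le_rfl

lemma L4_congr_a {a a' b c : ℝ × ℝ → ℝ≥0∞} (h : a =ᵐ[volume] a') :
    L4 a b c = L4 a' b c := by
  have h2 : ∀ᵐ ξ₁ : ℝ, ∀ᵐ μ₁ : ℝ, a (ξ₁, μ₁) = a' (ξ₁, μ₁) :=
    Measure.ae_ae_of_ae_prod (p := fun z : ℝ × ℝ => a z = a' z)
      (by rw [← Measure.volume_eq_prod ℝ ℝ]; exact h)
  refine lintegral_congr_ae (h2.mono fun ξ₁ h1 => ?_)
  refine lintegral_congr fun ξ₂ => lintegral_congr_ae (h1.mono fun μ₁ e => ?_)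
  exact lintegral_congr fun μ₂ => by rw [e]

lemma L4_congr_b {a b b' c : ℝ × ℝ → ℝ≥0∞} (h : b =ᵐ[volume] b') :
    L4 a b c = L4 a b' c := by
  have h2 : ∀ᵐ ξ₂ : ℝ, ∀ᵐ μ₂ : ℝ, b (ξ₂, μ₂) = b' (ξ₂, μ₂) :=
    Measure.ae_ae_of_ae_prod (p := fun z : ℝ × ℝ => b z = b' z)
      (by rw [← Measure.volume_eq_prod ℝ ℝ]; exact h)
  refine lintegral_congr fun ξ₁ => lintegral_congr_ae (h2.mono fun ξ₂ h1 => ?_)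
  refine lintegral_congr fun μ₁ => lintegral_congr_ae (h1.mono fun μ₂ e => ?_)
  simp only [e]

lemma L4_congr_c {a b c c' : ℝ × ℝ → ℝ≥0∞} (h : c =ᵐ[volume] c') :
    L4 a b c = L4 a b c' := by
  have h2 : ∀ᵐ s : ℝ, ∀ᵐ t : ℝ, c (s, t) = c' (s, t) :=
    Measure.ae_ae_of_ae_prod (p := fun z : ℝ × ℝ => c z = c' z)
      (by rw [← Measure.volume_eq_prod ℝ ℝ]; exact h)
  refine lintegral_congr fun ξ₁ => lintegral_congr_ae
    (((quasiMeasurePreserving_add_left volume ξ₁).ae h2).mono fun ξ₂ h1 => ?_)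
  refine lintegral_congr fun μ₁ => lintegral_congr_ae ?_
  have : ∀ᵐ μ₂ : ℝ, c (ξ₁ + ξ₂, μ₁ + μ₂ + Ωres ξ₁ ξ₂) = c' (ξ₁ + ξ₂, μ₁ + μ₂ + Ωres ξ₁ ξ₂) := by
    have hq : Measure.QuasiMeasurePreserving
        (fun μ₂ : ℝ => μ₁ + μ₂ + Ωres ξ₁ ξ₂) volume volume :=
      (quasiMeasurePreserving_add_right volume (Ωres ξ₁ ξ₂)).comp
        (quasiMeasurePreserving_add_left volume μ₁)
    exact hq.ae h1
  exact this.mono fun μ₂ e => by simp only [e]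

end Tri
namespace Tri

lemma lint_neg (f : ℝ → ℝ≥0∞) : ∫⁻ x, f (-x) = ∫⁻ x, f x :=
  (Measure.measurePreserving_neg volume).lintegral_comp_emb
    (MeasurableEquiv.neg ℝ).measurableEmbedding f

lemma lint_neg2 {f : ℝ × ℝ → ℝ≥0∞} (hf : Measurable f) :
    ∫⁻ p : ℝ × ℝ, f (-p.1, -p.2) = ∫⁻ p : ℝ × ℝ, f p := by
  rw [Measure.volume_eq_prod]
  calc (∫⁻ p : ℝ × ℝ, f (-p.1, -p.2) ∂(volume.prod volume))
      = ∫⁻ x, ∫⁻ y, f (-x, -y) :=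
        lintegral_prod _ ((hf.comp (measurable_fst.neg.prodMk measurable_snd.neg)).aemeasurable)
    _ = ∫⁻ x, ∫⁻ y, f (-x, y) := lintegral_congr fun x => lint_neg (fun y => f (-x, y))
    _ = ∫⁻ x, ∫⁻ y, f (x, y) := lint_neg fun x => ∫⁻ y, f (x, y)
    _ = ∫⁻ p : ℝ × ℝ, f p ∂(volume.prod volume) := (lintegral_prod _ hf.aemeasurable).symm

lemma master {a b c : ℝ × ℝ → ℝ≥0∞} (ha : Measurable a) (hb : Measurable b) (hc : Measurable c) :
    Measurable fun z : (ℝ × ℝ) × (ℝ × ℝ) =>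
      a z.1 * b z.2 * c (z.1.1 + z.2.1, z.1.2 + z.2.2 + Ωres z.1.1 z.2.1) :=
  ((ha.comp measurable_fst).mul (hb.comp measurable_snd)).mul
    (hc.comp ((measurable_fst.fst.add measurable_snd.fst).prodMk
      ((measurable_fst.snd.add measurable_snd.snd).add
        (meas_Ω.comp (measurable_fst.fst.prodMk measurable_snd.fst)))))

lemma est1 {a b c : ℝ × ℝ → ℝ≥0∞} (ha : Measurable a) (hb : Measurable b) (hc : Measurable c)
    {U2 V2 U3 V3 : Set ℝ} (hU2 : MeasurableSet U2) (hV2 : MeasurableSet V2)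
    (hU3 : MeasurableSet U3) (hV3 : MeasurableSet V3)
    (hr : min (volume U2) (volume U3) ≠ ⊤) (hs : min (volume V2) (volume V3) ≠ ⊤)
    (hbs : ∀ p : ℝ × ℝ, b p ≠ 0 → p.1 ∈ U2 ∧ p.2 ∈ V2)
    (hcs : ∀ p : ℝ × ℝ, c p ≠ 0 → p.1 ∈ U3 ∧ p.2 ∈ V3) :
    L4 a b c ≤ min (volume U2) (volume U3) ^ (1/2:ℝ) * min (volume V2) (volume V3) ^ (1/2:ℝ) *
      (n2 a * n2 b * n2 c) := by
  have hM := master ha hb hc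
  have key : L4 a b c = ∫⁻ ξ₁, ∫⁻ μ₁, a (ξ₁, μ₁) *
      ∫⁻ ξ₂, ∫⁻ μ₂, b (ξ₂, μ₂) * c (ξ₁ + ξ₂, μ₁ + μ₂ + Ωres ξ₁ ξ₂) := by
    unfold L4
    refine lintegral_congr fun ξ₁ => ?_
    have hmeas1 : Measurable fun w : ℝ × ℝ =>
        ∫⁻ μ₂, a (ξ₁, w.2) * b (w.1, μ₂) * c (ξ₁ + w.1, w.2 + μ₂ + Ωres ξ₁ w.1) := by
      have : Measurable fun z : (ℝ × ℝ) × ℝ =>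
          a (ξ₁, z.1.2) * b (z.1.1, z.2) * c (ξ₁ + z.1.1, z.1.2 + z.2 + Ωres ξ₁ z.1.1) :=
        hM.comp (((measurable_const (a := ξ₁)).prodMk measurable_fst.snd).prodMk
          (measurable_fst.fst.prodMk measurable_snd))
      exact this.lintegral_prod_right'
    rw [lintegral_lintegral_swap hmeas1.aemeasurable]
    refine lintegral_congr fun μ₁ => ?_
    have hbcm : Measurable fun w : ℝ × ℝ =>
        b (w.1, w.2) * c (ξ₁ + w.1, μ₁ + w.2 + Ωres ξ₁ w.1) := by
      refine (hb.comp (measurable_fst.prodMk measurable_snd)).mul (hc.comp ?_)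
      exact (measurable_const.add measurable_fst).prodMk
        ((measurable_const.add measurable_snd).add
          (meas_Ω.comp ((measurable_const (a := ξ₁)).prodMk measurable_fst)))
    calc (∫⁻ ξ₂, ∫⁻ μ₂, a (ξ₁, μ₁) * b (ξ₂, μ₂) * c (ξ₁ + ξ₂, μ₁ + μ₂ + Ωres ξ₁ ξ₂))
        = ∫⁻ ξ₂, a (ξ₁, μ₁) * ∫⁻ μ₂, b (ξ₂, μ₂) * c (ξ₁ + ξ₂, μ₁ + μ₂ + Ωres ξ₁ ξ₂) := by
          refine lintegral_congr fun ξ₂ => ?_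
          refine Eq.trans (lintegral_congr fun μ₂ => (by ring :
            a (ξ₁, μ₁) * b (ξ₂, μ₂) * c (ξ₁ + ξ₂, μ₁ + μ₂ + Ωres ξ₁ ξ₂) =
            a (ξ₁, μ₁) * (b (ξ₂, μ₂) * c (ξ₁ + ξ₂, μ₁ + μ₂ + Ωres ξ₁ ξ₂)))) ?_
          exact lintegral_const_mul _ (hbcm.comp ((measurable_const (a := ξ₂)).prodMk
            measurable_id))
      _ = a (ξ₁, μ₁) * ∫⁻ ξ₂, ∫⁻ μ₂, b (ξ₂, μ₂) * c (ξ₁ + ξ₂, μ₁ + μ₂ + Ωres ξ₁ ξ₂) :=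
          lintegral_const_mul _ hbcm.lintegral_prod_right'
  rw [key]
  exact core ha hb hc meas_Ω hU2 hV2 hU3 hV3 hr hs hbs hcs

lemma L4_comm {a b c : ℝ × ℝ → ℝ≥0∞} (ha : Measurable a) (hb : Measurable b)
    (hc : Measurable c) : L4 a b c = L4 b a c := by
  have hM := master ha hb hc
  unfold L4
  have hmeas1 : Measurable fun w : ℝ × ℝ => ∫⁻ μ₁, ∫⁻ μ₂,
      a (w.1, μ₁) * b (w.2, μ₂) * c (w.1 + w.2, μ₁ + μ₂ + Ωres w.1 w.2) := by
    have h0 : Measurable fun z : ((ℝ × ℝ) × ℝ) × ℝ =>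
        a (z.1.1.1, z.1.2) * b (z.1.1.2, z.2) *
          c (z.1.1.1 + z.1.1.2, z.1.2 + z.2 + Ωres z.1.1.1 z.1.1.2) :=
      hM.comp ((measurable_fst.fst.fst.prodMk measurable_fst.snd).prodMk
        (measurable_fst.fst.snd.prodMk measurable_snd))
    exact h0.lintegral_prod_right'.lintegral_prod_right'
  rw [lintegral_lintegral_swap hmeas1.aemeasurable]
  refine lintegral_congr fun ξ₂ => lintegral_congr fun ξ₁ => ?_
  have hmeas2 : Measurable fun w : ℝ × ℝ =>
      a (ξ₁, w.1) * b (ξ₂, w.2) * c (ξ₁ + ξ₂, w.1 + w.2 + Ωres ξ₁ ξ₂) :=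
    hM.comp (((measurable_const (a := ξ₁)).prodMk measurable_fst).prodMk
      ((measurable_const (a := ξ₂)).prodMk measurable_snd))
  rw [lintegral_lintegral_swap hmeas2.aemeasurable]
  refine lintegral_congr fun m1 => lintegral_congr fun m2 => ?_
  have e : c (ξ₁ + ξ₂, m2 + m1 + Ωres ξ₁ ξ₂) = c (ξ₂ + ξ₁, m1 + m2 + Ωres ξ₂ ξ₁) := by
    rw [add_comm ξ₁ ξ₂, add_comm m2 m1, Ωres_symm]
  rw [e]; ring

lemma est2 {a b c : ℝ × ℝ → ℝ≥0∞} (ha : Measurable a) (hb : Measurable b) (hc : Measurable c)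
    {U1 V1 U3 V3 : Set ℝ} (hU1 : MeasurableSet U1) (hV1 : MeasurableSet V1)
    (hU3 : MeasurableSet U3) (hV3 : MeasurableSet V3)
    (hr : min (volume U1) (volume U3) ≠ ⊤) (hs : min (volume V1) (volume V3) ≠ ⊤)
    (has : ∀ p : ℝ × ℝ, a p ≠ 0 → p.1 ∈ U1 ∧ p.2 ∈ V1)
    (hcs : ∀ p : ℝ × ℝ, c p ≠ 0 → p.1 ∈ U3 ∧ p.2 ∈ V3) :
    L4 a b c ≤ min (volume U1) (volume U3) ^ (1/2:ℝ) * min (volume V1) (volume V3) ^ (1/2:ℝ) *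
      (n2 a * n2 b * n2 c) := by
  rw [L4_comm ha hb hc]
  refine (est1 hb ha hc hU1 hV1 hU3 hV3 hr hs has hcs).trans (le_of_eq ?_)
  ring

def Φ3 (u v : ℝ) : ℝ := -(Ωres (u + v) (-v))

lemma meas_Φ3 : Measurable fun q : ℝ × ℝ => Φ3 q.1 q.2 := by
  unfold Φ3
  exact (meas_Ω.comp ((measurable_fst.add measurable_snd).prodMk measurable_snd.neg)).neg

lemma est3 {a b c : ℝ × ℝ → ℝ≥0∞} (ha : Measurable a) (hb : Measurable b) (hc : Measurable c)
    {U1 V1 U2 V2 : Set ℝ} (hU1 : MeasurableSet U1) (hV1 : MeasurableSet V1)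
    (hU2 : MeasurableSet U2) (hV2 : MeasurableSet V2)
    (hr : min (volume U1) (volume U2) ≠ ⊤) (hs : min (volume V1) (volume V2) ≠ ⊤)
    (has : ∀ p : ℝ × ℝ, a p ≠ 0 → p.1 ∈ U1 ∧ p.2 ∈ V1)
    (hbs : ∀ p : ℝ × ℝ, b p ≠ 0 → p.1 ∈ U2 ∧ p.2 ∈ V2) :
    L4 a b c ≤ min (volume U1) (volume U2) ^ (1/2:ℝ) * min (volume V1) (volume V2) ^ (1/2:ℝ) *
      (n2 a * n2 b * n2 c) := by
  have hM := master ha hb hc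
  have hM2 : Measurable fun z : (ℝ × ℝ) × (ℝ × ℝ) =>
      a (z.1.1, z.2.2 - (z.2.1 + Ωres z.1.1 z.1.2)) * b (z.1.2, z.2.1) *
        c (z.1.1 + z.1.2, z.2.2) := by
    refine ((ha.comp ?_).mul (hb.comp (measurable_fst.snd.prodMk measurable_snd.fst))).mul
      (hc.comp ((measurable_fst.fst.add measurable_fst.snd).prodMk measurable_snd.snd))
    exact measurable_fst.fst.prodMk (measurable_snd.snd.sub
      (measurable_snd.fst.add (meas_Ω.comp (measurable_fst.fst.prodMk measurable_fst.snd))))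
  have hM3 : Measurable fun z : (ℝ × ℝ) × (ℝ × ℝ) =>
      a (z.1.1 - z.1.2, z.2.2 - (z.2.1 + Ωres (z.1.1 - z.1.2) z.1.2)) * b (z.1.2, z.2.1) *
        c (z.1.1, z.2.2) := by
    refine ((ha.comp ?_).mul (hb.comp (measurable_fst.snd.prodMk measurable_snd.fst))).mul
      (hc.comp (measurable_fst.fst.prodMk measurable_snd.snd))
    exact (measurable_fst.fst.sub measurable_fst.snd).prodMk (measurable_snd.snd.sub
      (measurable_snd.fst.add (meas_Ω.comp
        ((measurable_fst.fst.sub measurable_fst.snd).prodMk measurable_fst.snd))))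
  set G : ℝ × ℝ → ℝ≥0∞ := fun q => b (-q.1, -q.2) with hGdef
  have hGm : Measurable G := hb.comp (measurable_fst.neg.prodMk measurable_snd.neg)
  -- step 1: swap μ₁ ↔ μ₂
  have step1 : L4 a b c = ∫⁻ ξ₁, ∫⁻ ξ₂, ∫⁻ μ₂, ∫⁻ μ₁,
      a (ξ₁, μ₁) * b (ξ₂, μ₂) * c (ξ₁ + ξ₂, μ₁ + μ₂ + Ωres ξ₁ ξ₂) := by
    unfold L4
    refine lintegral_congr fun ξ₁ => lintegral_congr fun ξ₂ => ?_
    exact lintegral_lintegral_swap (hM.comp (((measurable_const (a := ξ₁)).prodMk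
      measurable_fst).prodMk ((measurable_const (a := ξ₂)).prodMk
        measurable_snd))).aemeasurable
  -- step 2: substitute in μ₁
  have step2 : (∫⁻ ξ₁, ∫⁻ ξ₂, ∫⁻ μ₂, ∫⁻ μ₁,
      a (ξ₁, μ₁) * b (ξ₂, μ₂) * c (ξ₁ + ξ₂, μ₁ + μ₂ + Ωres ξ₁ ξ₂))
      = ∫⁻ ξ₁, ∫⁻ ξ₂, ∫⁻ μ₂, ∫⁻ t,
        a (ξ₁, t - (μ₂ + Ωres ξ₁ ξ₂)) * b (ξ₂, μ₂) * c (ξ₁ + ξ₂, t) := by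
    refine lintegral_congr fun ξ₁ => lintegral_congr fun ξ₂ => lintegral_congr fun μ₂ => ?_
    have e1 : ∀ μ₁ : ℝ, a (ξ₁, μ₁) * b (ξ₂, μ₂) * c (ξ₁ + ξ₂, μ₁ + μ₂ + Ωres ξ₁ ξ₂)
        = (fun t => a (ξ₁, t - (μ₂ + Ωres ξ₁ ξ₂)) * b (ξ₂, μ₂) * c (ξ₁ + ξ₂, t))
            (μ₁ + (μ₂ + Ωres ξ₁ ξ₂)) := by
      intro μ₁
      simp only
      rw [add_sub_cancel_right, ← add_assoc]
    rw [lintegral_congr e1]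
    exact lintegral_add_right_eq_self (μ := volume)
      (fun t => a (ξ₁, t - (μ₂ + Ωres ξ₁ ξ₂)) * b (ξ₂, μ₂) * c (ξ₁ + ξ₂, t))
      (μ₂ + Ωres ξ₁ ξ₂)
  -- step 3: swap ξ₁ ↔ ξ₂
  have step3 : (∫⁻ ξ₁, ∫⁻ ξ₂, ∫⁻ μ₂, ∫⁻ t,
      a (ξ₁, t - (μ₂ + Ωres ξ₁ ξ₂)) * b (ξ₂, μ₂) * c (ξ₁ + ξ₂, t))
      = ∫⁻ ξ₂, ∫⁻ ξ₁, ∫⁻ μ₂, ∫⁻ t,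
        a (ξ₁, t - (μ₂ + Ωres ξ₁ ξ₂)) * b (ξ₂, μ₂) * c (ξ₁ + ξ₂, t) := by
    have h0 : Measurable fun z : ((ℝ × ℝ) × ℝ) × ℝ =>
        a (z.1.1.1, z.2 - (z.1.2 + Ωres z.1.1.1 z.1.1.2)) * b (z.1.1.2, z.1.2) *
          c (z.1.1.1 + z.1.1.2, z.2) :=
      hM2.comp ((measurable_fst.fst.fst.prodMk measurable_fst.fst.snd).prodMk
        (measurable_fst.snd.prodMk measurable_snd))
    exact lintegral_lintegral_swap
      (h0.lintegral_prod_right'.lintegral_prod_right').aemeasurable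
  -- step 4: substitute in ξ₁
  have step4 : (∫⁻ ξ₂, ∫⁻ ξ₁, ∫⁻ μ₂, ∫⁻ t,
      a (ξ₁, t - (μ₂ + Ωres ξ₁ ξ₂)) * b (ξ₂, μ₂) * c (ξ₁ + ξ₂, t))
      = ∫⁻ ξ₂, ∫⁻ u, ∫⁻ μ₂, ∫⁻ t,
        a (u - ξ₂, t - (μ₂ + Ωres (u - ξ₂) ξ₂)) * b (ξ₂, μ₂) * c (u, t) := by
    refine lintegral_congr fun ξ₂ => ?_
    have e2 : ∀ ξ₁ : ℝ, (∫⁻ μ₂, ∫⁻ t,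
        a (ξ₁, t - (μ₂ + Ωres ξ₁ ξ₂)) * b (ξ₂, μ₂) * c (ξ₁ + ξ₂, t))
        = (fun u => ∫⁻ μ₂, ∫⁻ t,
            a (u - ξ₂, t - (μ₂ + Ωres (u - ξ₂) ξ₂)) * b (ξ₂, μ₂) * c (u, t)) (ξ₁ + ξ₂) := by
      intro ξ₁
      simp only [add_sub_cancel_right]
    rw [lintegral_congr e2]
    exact lintegral_add_right_eq_self (μ := volume)
      (fun u => ∫⁻ μ₂, ∫⁻ t,
        a (u - ξ₂, t - (μ₂ + Ωres (u - ξ₂) ξ₂)) * b (ξ₂, μ₂) * c (u, t)) ξ₂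
  -- step 5: swap ξ₂ ↔ u
  have step5 : (∫⁻ ξ₂, ∫⁻ u, ∫⁻ μ₂, ∫⁻ t,
      a (u - ξ₂, t - (μ₂ + Ωres (u - ξ₂) ξ₂)) * b (ξ₂, μ₂) * c (u, t))
      = ∫⁻ u, ∫⁻ ξ₂, ∫⁻ μ₂, ∫⁻ t,
        a (u - ξ₂, t - (μ₂ + Ωres (u - ξ₂) ξ₂)) * b (ξ₂, μ₂) * c (u, t) := by
    have h0 : Measurable fun z : ((ℝ × ℝ) × ℝ) × ℝ =>
        a (z.1.1.2 - z.1.1.1, z.2 - (z.1.2 + Ωres (z.1.1.2 - z.1.1.1) z.1.1.1)) *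
          b (z.1.1.1, z.1.2) * c (z.1.1.2, z.2) :=
      hM3.comp ((measurable_fst.fst.snd.prodMk measurable_fst.fst.fst).prodMk
        (measurable_fst.snd.prodMk measurable_snd))
    exact lintegral_lintegral_swap
      (h0.lintegral_prod_right'.lintegral_prod_right').aemeasurable
  -- step 6: swap μ₂ ↔ t (at fixed u, ξ₂)
  have step6 : (∫⁻ u, ∫⁻ ξ₂, ∫⁻ μ₂, ∫⁻ t,
      a (u - ξ₂, t - (μ₂ + Ωres (u - ξ₂) ξ₂)) * b (ξ₂, μ₂) * c (u, t))
      = ∫⁻ u, ∫⁻ ξ₂, ∫⁻ t, ∫⁻ μ₂,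
        a (u - ξ₂, t - (μ₂ + Ωres (u - ξ₂) ξ₂)) * b (ξ₂, μ₂) * c (u, t) := by
    refine lintegral_congr fun u => lintegral_congr fun ξ₂ => ?_
    exact lintegral_lintegral_swap (hM3.comp (((measurable_const (a := u)).prodMk
      (measurable_const (a := ξ₂))).prodMk
        (measurable_fst.prodMk measurable_snd))).aemeasurable
  -- step 7: swap ξ₂ ↔ t (at fixed u)
  have step7 : (∫⁻ u, ∫⁻ ξ₂, ∫⁻ t, ∫⁻ μ₂,
      a (u - ξ₂, t - (μ₂ + Ωres (u - ξ₂) ξ₂)) * b (ξ₂, μ₂) * c (u, t))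
      = ∫⁻ u, ∫⁻ t, ∫⁻ ξ₂, ∫⁻ μ₂,
        a (u - ξ₂, t - (μ₂ + Ωres (u - ξ₂) ξ₂)) * b (ξ₂, μ₂) * c (u, t) := by
    refine lintegral_congr fun u => ?_
    have h0 : Measurable fun z : (ℝ × ℝ) × ℝ =>
        a (u - z.1.1, z.1.2 - (z.2 + Ωres (u - z.1.1) z.1.1)) * b (z.1.1, z.2) *
          c (u, z.1.2) :=
      hM3.comp (((measurable_const (a := u)).prodMk measurable_fst.fst).prodMk
        (measurable_snd.prodMk measurable_fst.snd))
    exact lintegral_lintegral_swap h0.lintegral_prod_right'.aemeasurable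
  -- step 8: reflections in ξ₂ and μ₂
  have step8 : (∫⁻ u, ∫⁻ t, ∫⁻ ξ₂, ∫⁻ μ₂,
      a (u - ξ₂, t - (μ₂ + Ωres (u - ξ₂) ξ₂)) * b (ξ₂, μ₂) * c (u, t))
      = ∫⁻ u, ∫⁻ t, ∫⁻ ξ₂, ∫⁻ μ₂,
        c (u, t) * (G (ξ₂, μ₂) * a (u + ξ₂, t + μ₂ + Φ3 u ξ₂)) := by
    refine lintegral_congr fun u => lintegral_congr fun t => ?_
    calc (∫⁻ ξ₂, ∫⁻ μ₂, a (u - ξ₂, t - (μ₂ + Ωres (u - ξ₂) ξ₂)) * b (ξ₂, μ₂) * c (u, t))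
        = ∫⁻ ξ₂, ∫⁻ μ₂,
            a (u + ξ₂, t - (μ₂ + Ωres (u + ξ₂) (-ξ₂))) * b (-ξ₂, μ₂) * c (u, t) := by
          rw [← lint_neg (fun ξ₂ => ∫⁻ μ₂,
            a (u - ξ₂, t - (μ₂ + Ωres (u - ξ₂) ξ₂)) * b (ξ₂, μ₂) * c (u, t))]
          refine lintegral_congr fun ξ₂ => ?_
          simp only [sub_neg_eq_add]
      _ = ∫⁻ ξ₂, ∫⁻ μ₂,
            a (u + ξ₂, t - (-μ₂ + Ωres (u + ξ₂) (-ξ₂))) * b (-ξ₂, -μ₂) * c (u, t) := by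
          refine lintegral_congr fun ξ₂ => ?_
          exact (lint_neg (fun μ₂ =>
            a (u + ξ₂, t - (μ₂ + Ωres (u + ξ₂) (-ξ₂))) * b (-ξ₂, μ₂) * c (u, t))).symm
      _ = ∫⁻ ξ₂, ∫⁻ μ₂, c (u, t) * (G (ξ₂, μ₂) * a (u + ξ₂, t + μ₂ + Φ3 u ξ₂)) := by
          refine lintegral_congr fun ξ₂ => lintegral_congr fun μ₂ => ?_
          rw [hGdef]
          simp only
          rw [show t - (-μ₂ + Ωres (u + ξ₂) (-ξ₂)) = t + μ₂ + Φ3 u ξ₂ by unfold Φ3; ring]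
          ring
  -- step 9: pull out c
  have hGA : Measurable fun z : (ℝ × ℝ) × (ℝ × ℝ) =>
      G z.2 * a (z.1.1 + z.2.1, z.1.2 + z.2.2 + Φ3 z.1.1 z.2.1) :=
    (hGm.comp measurable_snd).mul (ha.comp
      ((measurable_fst.fst.add measurable_snd.fst).prodMk
        ((measurable_fst.snd.add measurable_snd.snd).add
          (meas_Φ3.comp (measurable_fst.fst.prodMk measurable_snd.fst)))))
  have step9 : (∫⁻ u, ∫⁻ t, ∫⁻ ξ₂, ∫⁻ μ₂,
      c (u, t) * (G (ξ₂, μ₂) * a (u + ξ₂, t + μ₂ + Φ3 u ξ₂)))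
      = ∫⁻ u, ∫⁻ t, c (u, t) * ∫⁻ ξ₂, ∫⁻ μ₂,
          G (ξ₂, μ₂) * a (u + ξ₂, t + μ₂ + Φ3 u ξ₂) := by
    refine lintegral_congr fun u => lintegral_congr fun t => ?_
    calc (∫⁻ ξ₂, ∫⁻ μ₂, c (u, t) * (G (ξ₂, μ₂) * a (u + ξ₂, t + μ₂ + Φ3 u ξ₂)))
        = ∫⁻ ξ₂, c (u, t) * ∫⁻ μ₂, G (ξ₂, μ₂) * a (u + ξ₂, t + μ₂ + Φ3 u ξ₂) := by
          refine lintegral_congr fun ξ₂ => ?_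
          exact lintegral_const_mul _ (hGA.comp ((measurable_const
            (a := ((u, t) : ℝ × ℝ))).prodMk ((measurable_const (a := ξ₂)).prodMk
              measurable_id)))
      _ = c (u, t) * ∫⁻ ξ₂, ∫⁻ μ₂, G (ξ₂, μ₂) * a (u + ξ₂, t + μ₂ + Φ3 u ξ₂) := by
          refine lintegral_const_mul _ ?_
          exact (hGA.comp ((measurable_const (a := ((u, t) : ℝ × ℝ))).prodMk
            (measurable_fst.prodMk measurable_snd))).lintegral_prod_right'
  -- apply core
  have hr' : min (volume (-U2)) (volume U1) ≠ ⊤ := by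
    rw [Measure.measure_neg, min_comm]; exact hr
  have hs' : min (volume (-V2)) (volume V1) ≠ ⊤ := by
    rw [Measure.measure_neg, min_comm]; exact hs
  have hcore := core hc hGm ha meas_Φ3 hU2.neg hV2.neg hU1 hV1 hr' hs'
    (fun p hp => ⟨Set.mem_neg.mpr (hbs _ hp).1, Set.mem_neg.mpr (hbs _ hp).2⟩) has
  have hn2G : n2 G = n2 b := by
    unfold n2
    congr 1
    exact lint_neg2 (hb.pow_const _)
  rw [step1, step2, step3, step4, step5, step6, step7, step8, step9]
  refine hcore.trans (le_of_eq ?_)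
  rw [Measure.measure_neg, Measure.measure_neg, min_comm (volume U2), min_comm (volume V2), hn2G]
  ring

end Tri

namespace Tri

lemma Idy_meas (k : ℤ) : MeasurableSet (Idy k) := by
  unfold Idy
  rw [Set.setOf_and]
  exact ((isClosed_le continuous_const continuous_abs).measurableSet).inter
    ((isClosed_le continuous_abs continuous_const).measurableSet)

lemma Itil_meas (j : ℕ) : MeasurableSet (Itil j) := by
  unfold Itil
  split
  · exact measurableSet_Icc
  · exact Idy_meas _

lemma rpow_int (k : ℤ) : (2:ℝ) ^ ((k:ℝ)) = (2:ℝ) ^ k := by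
  rw [← Real.rpow_intCast]

lemma Idy_vol (k : ℤ) : volume (Idy k) ≤ ENNReal.ofReal ((2:ℝ) ^ ((k:ℝ) + 2)) := by
  have hsub : Idy k ⊆ Set.Icc (-((2:ℝ) ^ (k+1))) ((2:ℝ) ^ (k+1)) := fun ξ hξ =>
    abs_le.mp hξ.2
  refine (measure_mono hsub).trans ?_
  rw [Real.volume_Icc]
  apply ENNReal.ofReal_le_ofReal
  have h1 : ((k:ℝ) + 2) = (((k + 2 : ℤ)):ℝ) := by push_cast; ring
  conv_rhs => rw [h1, Real.rpow_intCast, show (k + 2 : ℤ) = 1 + (k + 1) by ring,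
    zpow_add₀ (by norm_num : (2:ℝ) ≠ 0), zpow_one]
  linarith

lemma Itil_vol (j : ℕ) : volume (Itil j) ≤ ENNReal.ofReal ((2:ℝ) ^ ((j:ℝ) + 2)) := by
  unfold Itil
  split
  · next hj =>
    subst hj
    rw [Real.volume_Icc]
    apply ENNReal.ofReal_le_ofReal
    have : (2:ℝ) ^ ((0:ℕ):ℝ) * 4 = 4 := by norm_num
    have h4 : (2:ℝ) ^ (((0:ℕ):ℝ) + 2) = 4 := by
      rw [show (((0:ℕ):ℝ) + 2) = ((2:ℤ):ℝ) by push_cast; ring, Real.rpow_intCast]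
      norm_num
    rw [h4]; norm_num
  · exact (Idy_vol (j : ℤ)).trans (le_of_eq (by push_cast; ring_nf))

lemma min_vol_Idy (k k' : ℤ) : min (volume (Idy k)) (volume (Idy k')) ≤
    ENNReal.ofReal ((2:ℝ) ^ (((min k k' : ℤ):ℝ) + 2)) := by
  rcases le_total k k' with h | h
  · rw [min_eq_left h]
    exact (min_le_left _ _).trans (Idy_vol k)
  · rw [min_eq_right h]
    exact (min_le_right _ _).trans (Idy_vol k')

lemma min_vol_Itil (j j' : ℕ) : min (volume (Itil j)) (volume (Itil j')) ≤
    ENNReal.ofReal ((2:ℝ) ^ (((min j j' : ℕ):ℝ) + 2)) := by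
  rcases le_total j j' with h | h
  · rw [min_eq_left h]
    exact (min_le_left _ _).trans (Itil_vol j)
  · rw [min_eq_right h]
    exact (min_le_right _ _).trans (Itil_vol j')

lemma min_vol_Idy_ne_top (k k' : ℤ) : min (volume (Idy k)) (volume (Idy k')) ≠ ⊤ :=
  ((min_vol_Idy k k').trans_lt ENNReal.ofReal_lt_top).ne

lemma min_vol_Itil_ne_top (j j' : ℕ) : min (volume (Itil j)) (volume (Itil j')) ≠ ⊤ :=
  ((min_vol_Itil j j').trans_lt ENNReal.ofReal_lt_top).ne

end Tri
namespace Tri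

lemma rep {f : ℝ × ℝ → ℂ} (hf2 : MemLp f 2 (volume : Measure (ℝ × ℝ)))
    {S : Set (ℝ × ℝ)} (hSm : MeasurableSet S) (hsf : Function.support f ⊆ S) :
    ∃ a : ℝ × ℝ → ℝ≥0∞, Measurable a ∧ (a =ᵐ[volume] fun p => (‖f p‖₊ : ℝ≥0∞)) ∧
      (∀ p, a p ≠ 0 → p ∈ S) ∧ n2 a = eLpNorm f 2 volume := by
  obtain ⟨f', hf'sm, hff'⟩ := hf2.aestronglyMeasurable
  refine ⟨S.indicator (fun p => (‖f' p‖₊ : ℝ≥0∞)), ?_, ?_, ?_, ?_⟩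
  · exact (hf'sm.measurable.nnnorm.coe_nnreal_ennreal).indicator hSm
  · filter_upwards [hff'] with p hp
    by_cases hpS : p ∈ S
    · simp [Set.indicator_of_mem hpS, hp]
    · have hf0 : f p = 0 := by
        by_contra h0
        exact hpS (hsf (Function.mem_support.mpr h0))
      simp [Set.indicator_of_notMem hpS, hf0]
  · intro p hp
    by_contra hpS
    exact hp (Set.indicator_of_notMem hpS _)
  · unfold n2
    rw [eLpNorm_eq_lintegral_rpow_enorm_toReal (by norm_num) (by norm_num)]
    simp only [ENNReal.toReal_ofNat]
    congr 1
    refine lintegral_congr_ae ?_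
    filter_upwards [hff'] with p hp
    by_cases hpS : p ∈ S
    · simp [Set.indicator_of_mem hpS, hp]
      rfl
    · have hf0 : f p = 0 := by
        by_contra h0
        exact hpS (hsf (Function.mem_support.mpr h0))
      simp [Set.indicator_of_notMem hpS, hf0, ENNReal.zero_rpow_of_pos]

lemma final_num {Jv : ℂ} {Sf Sg Sh : ℝ≥0∞} (hSf : Sf ≠ ⊤) (hSg : Sg ≠ ⊤) (hSh : Sh ≠ ⊤)
    (M : ℝ) (N : ℝ)
    (hb : (‖Jv‖₊ : ℝ≥0∞) ≤ ENNReal.ofReal ((2:ℝ) ^ (M + 2)) ^ (1/2:ℝ) *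
      ENNReal.ofReal ((2:ℝ) ^ (N + 2)) ^ (1/2:ℝ) * (Sf * Sg * Sh)) :
    ‖Jv‖ ≤ 4 * (2:ℝ) ^ (M/2) * (2:ℝ) ^ (N/2) * (Sf.toReal * Sg.toReal * Sh.toReal) := by
  have hof : ∀ A : ℝ, ENNReal.ofReal ((2:ℝ) ^ (A + 2)) ^ (1/2:ℝ)
      = ENNReal.ofReal ((2:ℝ) ^ (A/2) * 2) := by
    intro A
    rw [ENNReal.ofReal_rpow_of_pos (Real.rpow_pos_of_pos two_pos _)]
    congr 1
    rw [← Real.rpow_mul (by norm_num : (0:ℝ) ≤ 2),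
      show (A + 2) * (1/2:ℝ) = A/2 + 1 by ring, Real.rpow_add two_pos, Real.rpow_one]
  rw [hof M, hof N] at hb
  have hne : ENNReal.ofReal ((2:ℝ) ^ (M/2) * 2) * ENNReal.ofReal ((2:ℝ) ^ (N/2) * 2) *
      (Sf * Sg * Sh) ≠ ⊤ :=
    ENNReal.mul_ne_top (ENNReal.mul_ne_top ENNReal.ofReal_ne_top ENNReal.ofReal_ne_top)
      (ENNReal.mul_ne_top (ENNReal.mul_ne_top hSf hSg) hSh)
  have := ENNReal.toReal_mono hne hb
  rw [ENNReal.toReal_mul, ENNReal.toReal_mul, ENNReal.toReal_mul, ENNReal.toReal_mul,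
    ENNReal.coe_toReal, coe_nnnorm,
    ENNReal.toReal_ofReal (by positivity), ENNReal.toReal_ofReal (by positivity)] at this
  calc ‖Jv‖ ≤ (2:ℝ) ^ (M/2) * 2 * ((2:ℝ) ^ (N/2) * 2) * (Sf.toReal * Sg.toReal * Sh.toReal) :=
        this
    _ = 4 * (2:ℝ) ^ (M/2) * (2:ℝ) ^ (N/2) * (Sf.toReal * Sg.toReal * Sh.toReal) := by ring

end Tri

theorem trilinear_estimate_a :
    ∃ C : ℝ, 0 < C ∧ ∀ (k₁ k₂ k₃ : ℤ) (j₁ j₂ j₃ : ℕ) (f g h : ℝ × ℝ → ℂ),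
      HasCompactSupport f → HasCompactSupport g → HasCompactSupport h →
      MemLp f 2 volume → MemLp g 2 volume → MemLp h 2 volume →
      Function.support f ⊆ Idy k₁ ×ˢ Itil j₁ →
      Function.support g ⊆ Idy k₂ ×ˢ Itil j₂ →
      Function.support h ⊆ Idy k₃ ×ˢ Itil j₃ →
      ‖J f g h‖ ≤
        C * (2 : ℝ) ^ (((min k₁ (min k₂ k₃) : ℤ) : ℝ) / 2) *
          (2 : ℝ) ^ (((min j₁ (min j₂ j₃) : ℕ) : ℝ) / 2) *
          (L2norm f * L2norm g * L2norm h) := by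
  refine ⟨4, by norm_num, ?_⟩
  intro k₁ k₂ k₃ j₁ j₂ j₃ f g h _ _ _ hf2 hg2 hh2 hsf hsg hsh
  obtain ⟨a, ham, hae, has, hn2a⟩ := Tri.rep hf2 ((Tri.Idy_meas k₁).prod (Tri.Itil_meas j₁)) hsf
  obtain ⟨b, hbm, hbe, hbs, hn2b⟩ := Tri.rep hg2 ((Tri.Idy_meas k₂).prod (Tri.Itil_meas j₂)) hsg
  obtain ⟨c, hcm, hce, hcs, hn2c⟩ := Tri.rep hh2 ((Tri.Idy_meas k₃).prod (Tri.Itil_meas j₃)) hsh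
  have has' : ∀ p : ℝ × ℝ, a p ≠ 0 → p.1 ∈ Idy k₁ ∧ p.2 ∈ Itil j₁ := fun p hp => has p hp
  have hbs' : ∀ p : ℝ × ℝ, b p ≠ 0 → p.1 ∈ Idy k₂ ∧ p.2 ∈ Itil j₂ := fun p hp => hbs p hp
  have hcs' : ∀ p : ℝ × ℝ, c p ≠ 0 → p.1 ∈ Idy k₃ ∧ p.2 ∈ Itil j₃ := fun p hp => hcs p hp
  have hL : (‖J f g h‖₊ : ℝ≥0∞) ≤ Tri.L4 a b c := by
    refine (Tri.J_le f g h).trans (le_of_eq ?_)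
    rw [Tri.L4_congr_a hae.symm, Tri.L4_congr_b hbe.symm, Tri.L4_congr_c hce.symm]
  set Sf := eLpNorm f 2 volume
  set Sg := eLpNorm g 2 volume
  set Sh := eLpNorm h 2 volume
  have hSf : Sf ≠ ⊤ := hf2.eLpNorm_ne_top
  have hSg : Sg ≠ ⊤ := hg2.eLpNorm_ne_top
  have hSh : Sh ≠ ⊤ := hh2.eLpNorm_ne_top
  have pick : (min k₂ k₃ = min k₁ (min k₂ k₃) ∧ min j₂ j₃ = min j₁ (min j₂ j₃)) ∨
      (min k₁ k₃ = min k₁ (min k₂ k₃) ∧ min j₁ j₃ = min j₁ (min j₂ j₃)) ∨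
      (min k₁ k₂ = min k₁ (min k₂ k₃) ∧ min j₁ j₂ = min j₁ (min j₂ j₃)) := by
    omega
  have hgoal : ∀ ka kb : ℤ, ∀ ja jb : ℕ,
      Tri.L4 a b c ≤ min (volume (Idy ka)) (volume (Idy kb)) ^ (1/2:ℝ) *
        min (volume (Itil ja)) (volume (Itil jb)) ^ (1/2:ℝ) * (Sf * Sg * Sh) →
      ka ⊓ kb = min k₁ (min k₂ k₃) → ja ⊓ jb = min j₁ (min j₂ j₃) →
      ‖J f g h‖ ≤ 4 * (2:ℝ) ^ (((min k₁ (min k₂ k₃) : ℤ) : ℝ) / 2) *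
        (2:ℝ) ^ (((min j₁ (min j₂ j₃) : ℕ) : ℝ) / 2) *
        (L2norm f * L2norm g * L2norm h) := by
    intro ka kb ja jb hest hk hj
    have hbound : (‖J f g h‖₊ : ℝ≥0∞) ≤
        ENNReal.ofReal ((2:ℝ) ^ (((min k₁ (min k₂ k₃) : ℤ) : ℝ) + 2)) ^ (1/2:ℝ) *
        ENNReal.ofReal ((2:ℝ) ^ (((min j₁ (min j₂ j₃) : ℕ) : ℝ) + 2)) ^ (1/2:ℝ) *
        (Sf * Sg * Sh) := by
      refine (hL.trans hest).trans ?_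
      gcongr
      · exact (Tri.min_vol_Idy ka kb).trans (by rw [hk])
      · exact (Tri.min_vol_Itil ja jb).trans (by rw [hj])
    exact Tri.final_num hSf hSg hSh _ _ hbound
  rcases pick with ⟨hk, hj⟩ | ⟨hk, hj⟩ | ⟨hk, hj⟩
  · refine hgoal k₂ k₃ j₂ j₃ ?_ hk hj
    have := Tri.est1 ham hbm hcm (Tri.Idy_meas k₂) (Tri.Itil_meas j₂) (Tri.Idy_meas k₃)
      (Tri.Itil_meas j₃) (Tri.min_vol_Idy_ne_top k₂ k₃) (Tri.min_vol_Itil_ne_top j₂ j₃)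
      hbs' hcs'
    rwa [hn2a, hn2b, hn2c] at this
  · refine hgoal k₁ k₃ j₁ j₃ ?_ hk hj
    have := Tri.est2 ham hbm hcm (Tri.Idy_meas k₁) (Tri.Itil_meas j₁) (Tri.Idy_meas k₃)
      (Tri.Itil_meas j₃) (Tri.min_vol_Idy_ne_top k₁ k₃) (Tri.min_vol_Itil_ne_top j₁ j₃)
      has' hcs'
    rwa [hn2a, hn2b, hn2c] at this
  · refine hgoal k₁ k₂ j₁ j₂ ?_ hk hj
    have := Tri.est3 ham hbm hcm (Tri.Idy_meas k₁) (Tri.Itil_meas j₁) (Tri.Idy_meas k₂)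
      (Tri.Itil_meas j₂) (Tri.min_vol_Idy_ne_top k₁ k₂) (Tri.min_vol_Itil_ne_top j₁ j₂)
      has' hbs'
    rwa [hn2a, hn2b, hn2c] at this
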